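/- arXiv:2202.07277 — 3 statements merged into one kernel-verified Lean document; each statement's English description precedes it below -/
import Mathlib

section
/- If (f, Z) and (f', Z') are two deterministic representations of the same stochastic model g with input X = (X₁,…,X_m), then for every subset u ⊆ {1,…,m}, E[f(X,Z) | X_u] = E[f'(X,Z') | X_u] almost surely, and consequently Var(E[f(X,Z) | X_u]) / Var(f(X,Z)) = Var(E[f'(X,Z') | X_u]) / Var(f'(X,Z')); i.e., closed Sobol' indices with respect to groups of uncertain parameters do not depend on the chosen representation. -/
open MeasureTheory ProbabilityTheory

private lemma variance_congr_aux {Ω : Type*} [MeasurableSpace Ω] {μ : Measure Ω}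
    {g g' : Ω → ℝ} (h : g =ᵐ[μ] g') : variance g μ = variance g' μ := by
  unfold variance evariance
  rw [integral_congr_ae h, lintegral_congr_ae (h.mono fun ω hω => by rw [hω])]

private lemma map_eq_integral_aux {Ω : Type*} [MeasurableSpace Ω] {μ : Measure Ω}
    {Y Y' : Ω → ℝ} (hY : Measurable Y) (hY' : Measurable Y')
    (h : μ.map Y = μ.map Y') (g : ℝ → ℝ) (hg : Measurable g) :
    ∫ ω, g (Y ω) ∂μ = ∫ ω, g (Y' ω) ∂μ := by
  rw [← integral_map hY.aemeasurable hg.aestronglyMeasurable, h,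
    integral_map hY'.aemeasurable hg.aestronglyMeasurable]

/-- If `(f, Z)` and `(f', Z')` are two deterministic representations of the same stochastic
model with input `X = (X₁, …, X_m)`, then for every group `u` of inputs the conditional
expectations given `X_u` agree a.s., and the corresponding closed Sobol' indices coincide:
they do not depend on the chosen representation. -/
theorem stmt3 {Ω 𝒵 𝒵' : Type*} [MeasurableSpace Ω] [MeasurableSpace 𝒵] [MeasurableSpace 𝒵']
    (μ : Measure Ω) [IsProbabilityMeasure μ] {m : ℕ}
    (X : Ω → (Fin m → ℝ)) (Z : Ω → 𝒵) (Z' : Ω → 𝒵')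
    (f : (Fin m → ℝ) → 𝒵 → ℝ) (f' : (Fin m → ℝ) → 𝒵' → ℝ)
    (hX : Measurable X) (hZ : Measurable Z) (hZ' : Measurable Z')
    (hf : Measurable (fun p : (Fin m → ℝ) × 𝒵 => f p.1 p.2))
    (hf' : Measurable (fun p : (Fin m → ℝ) × 𝒵' => f' p.1 p.2))
    -- `Z` and `Z'` are independent of the input `X`
    (hXZ : IndepFun X Z μ) (hXZ' : IndepFun X Z' μ)
    -- both pairs represent the same stochastic model: equal joint laws with `X`
    (hrep : μ.map (fun ω => (X ω, f (X ω) (Z ω))) = μ.map (fun ω => (X ω, f' (X ω) (Z' ω))))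
    -- square integrability and positive variance of the outputs
    (hL2 : MemLp (fun ω => f (X ω) (Z ω)) 2 μ)
    (hL2' : MemLp (fun ω => f' (X ω) (Z' ω)) 2 μ)
    (hvar : 0 < variance (fun ω => f (X ω) (Z ω)) μ)
    (hvar' : 0 < variance (fun ω => f' (X ω) (Z' ω)) μ)
    (u : Finset (Fin m)) :
    let mu : MeasurableSpace Ω :=
      MeasurableSpace.comap (fun ω (j : u) => X ω j) inferInstance
    (μ[(fun ω => f (X ω) (Z ω)) | mu] =ᵐ[μ] μ[(fun ω => f' (X ω) (Z' ω)) | mu]) ∧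
    variance (μ[(fun ω => f (X ω) (Z ω)) | mu]) μ / variance (fun ω => f (X ω) (Z ω)) μ
      = variance (μ[(fun ω => f' (X ω) (Z' ω)) | mu]) μ
        / variance (fun ω => f' (X ω) (Z' ω)) μ := by
  rename_i mΩ m𝒵 m𝒵' hPM
  set Y : Ω → ℝ := fun ω => f (X ω) (Z ω) with hYdef
  set Y' : Ω → ℝ := fun ω => f' (X ω) (Z' ω) with hY'def
  have hYm : Measurable Y := hf.comp (hX.prodMk hZ)
  have hY'm : Measurable Y' := hf'.comp (hX.prodMk hZ')
  -- the restriction map and the group variable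
  set π : (Fin m → ℝ) → (u → ℝ) := fun x j => x j with hπdef
  have hπ : Measurable π := measurable_pi_lambda _ fun j => measurable_pi_apply _
  have hW : Measurable (fun ω (j : u) => X ω j) := hπ.comp hX
  have hm : MeasurableSpace.comap (fun ω (j : u) => X ω j) inferInstance ≤ mΩ := hW.comap_le
  haveI : SigmaFinite (μ.trim hm) := inferInstance
  -- equal laws of the outputs
  have hmapY : μ.map Y = μ.map Y' := by
    have h1 := congrArg (Measure.map Prod.snd) hrep
    rwa [Measure.map_map measurable_snd (hX.prodMk hYm),
      Measure.map_map measurable_snd (hX.prodMk hY'm)] at h1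
  -- set integrals agree on `mu`-measurable sets
  have key : ∀ s : Set Ω,
      MeasurableSet[MeasurableSpace.comap (fun ω (j : u) => X ω j) inferInstance] s →
      ∫ ω in s, Y ω ∂μ = ∫ ω in s, Y' ω ∂μ := by
    rintro s ⟨t, ht, rfl⟩
    have hpre : ∀ (g : Ω → ℝ),
        (fun a => (X a, g a)) ⁻¹' ((π ⁻¹' t) ×ˢ Set.univ) = (fun ω (j : u) => X ω j) ⁻¹' t := by
      intro g; ext ω; simp [π, Set.mem_preimage, Set.mem_prod]
    have h1 : ∫ ω in (fun ω (j : u) => X ω j) ⁻¹' t, Y ω ∂μ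
        = ∫ p in (π ⁻¹' t) ×ˢ Set.univ, p.2 ∂(μ.map (fun ω => (X ω, Y ω))) := by
      rw [setIntegral_map ((hπ ht).prod MeasurableSet.univ)
        measurable_snd.aestronglyMeasurable (hX.prodMk hYm).aemeasurable, hpre Y]
    have h2 : ∫ ω in (fun ω (j : u) => X ω j) ⁻¹' t, Y' ω ∂μ
        = ∫ p in (π ⁻¹' t) ×ˢ Set.univ, p.2 ∂(μ.map (fun ω => (X ω, Y' ω))) := by
      rw [setIntegral_map ((hπ ht).prod MeasurableSet.univ)
        measurable_snd.aestronglyMeasurable (hX.prodMk hY'm).aemeasurable, hpre Y']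
    rw [h1, h2, hrep]
  -- the conditional expectations agree
  have hcond : μ[Y | MeasurableSpace.comap (fun ω (j : u) => X ω j) inferInstance]
      =ᵐ[μ] μ[Y' | MeasurableSpace.comap (fun ω (j : u) => X ω j) inferInstance] := by
    refine (ae_eq_condExp_of_forall_setIntegral_eq hm (hL2'.integrable one_le_two)
      (fun s _ _ => integrable_condExp.integrableOn) (fun s hs hμs => ?_)
      (StronglyMeasurable.aestronglyMeasurable stronglyMeasurable_condExp))
    rw [setIntegral_condExp hm (hL2.integrable one_le_two) hs]
    exact key s hs
  -- variances of the outputs agree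
  have hvarY : variance Y μ = variance Y' μ := by
    have hi : ∫ ω, Y ω ∂μ = ∫ ω, Y' ω ∂μ :=
      map_eq_integral_aux hYm hY'm hmapY id measurable_id
    have hisq : ∫ ω, (Y ω) ^ 2 ∂μ = ∫ ω, (Y' ω) ^ 2 ∂μ :=
      map_eq_integral_aux hYm hY'm hmapY (fun x => x ^ 2) (measurable_id.pow_const 2)
    rw [variance_eq_sub hL2, variance_eq_sub hL2']
    simp only [Pi.pow_apply]
    rw [hi, hisq]
  have hfinal : variance (μ[Y | MeasurableSpace.comap (fun ω (j : u) => X ω j) inferInstance]) μ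
        / variance Y μ
      = variance (μ[Y' | MeasurableSpace.comap (fun ω (j : u) => X ω j) inferInstance]) μ
        / variance Y' μ := by
    rw [variance_congr_aux hcond, hvarY]
  intro mu
  exact ⟨hcond, hfinal⟩
end

section
/- Let X be Rademacher (P(X=±1)=1/2) and Z, Z' i.i.d. standard normal, independent of X. Define f(X,Z) = X·Z and f'(X,Z') = X²·Z'. Then E[f(X,Z) | Z] = 0 almost surely while E[f'(X,Z') | Z'] = Z' almost surely; hence the first-order Sobol' index of the intrinsic randomness is S_Z(f) = Var(E[f(X,Z)|Z])/Var(f(X,Z)) = 0 for the first representation and S_{Z'}(f') = Var(E[f'(X,Z')|Z'])/Var(f'(X,Z')) = 1 for the second. -/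
open MeasureTheory ProbabilityTheory
open scoped ENNReal

section SobolAux
open Real Filter
open scoped Topology


lemma myIexp : Integrable (fun x : ℝ => Real.exp (-2⁻¹ * x ^ 2)) :=
  integrable_exp_neg_mul_sq (by norm_num)

lemma myIsq : Integrable (fun x : ℝ => x ^ 2 * Real.exp (-2⁻¹ * x ^ 2)) := by
  have h := integrable_rpow_mul_exp_neg_mul_sq (b := 2⁻¹) (by norm_num) (s := 2) (by norm_num)
  convert h using 2 with x
  rw [show ((2:ℝ)) = ((2:ℕ):ℝ) by norm_num, Real.rpow_natCast]

lemma myIone : Integrable (fun x : ℝ => x * Real.exp (-2⁻¹ * x ^ 2)) := by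
  have h := integrable_rpow_mul_exp_neg_mul_sq (b := 2⁻¹) (by norm_num) (s := 1) (by norm_num)
  simpa [Real.rpow_one] using h

lemma myTendTop : Tendsto (fun x : ℝ => x * Real.exp (-2⁻¹ * x ^ 2)) atTop (𝓝 0) := by
  have hcomp : Tendsto (fun x : ℝ => 2⁻¹ * x ^ 2) atTop atTop :=
    (tendsto_pow_atTop (two_ne_zero)).const_mul_atTop (by norm_num)
  have h1 : Tendsto (fun y : ℝ => y * Real.exp (-y)) atTop (𝓝 0) := by
    simpa using tendsto_pow_mul_exp_neg_atTop_nhds_zero 1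
  have h2 := h1.comp hcomp
  refine squeeze_zero' ?_ ?_ h2
  · filter_upwards [eventually_ge_atTop (0:ℝ)] with x hx
    positivity
  · filter_upwards [eventually_ge_atTop (2:ℝ)] with x hx
    simp only [Function.comp_apply]
    rw [neg_mul]
    gcongr
    nlinarith

lemma myDeriv (x : ℝ) : HasDerivAt (fun x : ℝ => -x * Real.exp (-2⁻¹ * x ^ 2))
    (x ^ 2 * Real.exp (-2⁻¹ * x ^ 2) - Real.exp (-2⁻¹ * x ^ 2)) x := by
  have he : HasDerivAt (fun x : ℝ => Real.exp (-2⁻¹ * x ^ 2))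
      (Real.exp (-2⁻¹ * x ^ 2) * (-2⁻¹ * (2 * x ^ 1))) x :=
    ((hasDerivAt_pow 2 x).const_mul (-2⁻¹ : ℝ)).exp
  have hm : HasDerivAt (fun x : ℝ => -x) (-1) x := (hasDerivAt_id x).neg
  have := hm.mul he
  exact this.congr_deriv (by ring)

lemma myExpDeriv (x : ℝ) : HasDerivAt (fun x : ℝ => -Real.exp (-2⁻¹ * x ^ 2))
    (x * Real.exp (-2⁻¹ * x ^ 2)) x := by
  have he : HasDerivAt (fun x : ℝ => Real.exp (-2⁻¹ * x ^ 2))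
      (Real.exp (-2⁻¹ * x ^ 2) * (-2⁻¹ * (2 * x ^ 1))) x :=
    ((hasDerivAt_pow 2 x).const_mul (-2⁻¹ : ℝ)).exp
  have := he.neg
  exact this.congr_deriv (by ring)

lemma myExpTendTop : Tendsto (fun x : ℝ => -Real.exp (-2⁻¹ * x ^ 2)) atTop (𝓝 0) := by
  have hcomp : Tendsto (fun x : ℝ => -(2⁻¹ * x ^ 2)) atTop atBot :=
    tendsto_neg_atTop_atBot.comp ((tendsto_pow_atTop (two_ne_zero)).const_mul_atTop (by norm_num))
  have := (Real.tendsto_exp_atBot.comp hcomp).neg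
  simpa [Function.comp_def, neg_mul] using this

lemma myExpTendBot : Tendsto (fun x : ℝ => -Real.exp (-2⁻¹ * x ^ 2)) atBot (𝓝 0) := by
  have h := myExpTendTop.comp tendsto_neg_atBot_atTop
  simpa [Function.comp_def] using h

lemma myInt1 : ∫ x : ℝ, x * Real.exp (-2⁻¹ * x ^ 2) = 0 := by
  have h := integral_of_hasDerivAt_of_tendsto myExpDeriv myIone myExpTendBot myExpTendTop
  simpa using h

lemma myTendBot : Tendsto (fun x : ℝ => -x * Real.exp (-2⁻¹ * x ^ 2)) atBot (𝓝 0) := by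
  have h := myTendTop.comp tendsto_neg_atBot_atTop
  simpa [Function.comp_def, neg_mul] using h

lemma myTendTop' : Tendsto (fun x : ℝ => -x * Real.exp (-2⁻¹ * x ^ 2)) atTop (𝓝 0) := by
  have := myTendTop.neg
  simpa [neg_mul] using this

lemma myInt2 : ∫ x : ℝ, x ^ 2 * Real.exp (-2⁻¹ * x ^ 2) = Real.sqrt (2 * π) := by
  have h := integral_of_hasDerivAt_of_tendsto myDeriv (myIsq.sub myIexp) myTendBot myTendTop'
  rw [integral_sub myIsq myIexp] at h
  have hg : ∫ x : ℝ, Real.exp (-2⁻¹ * x ^ 2) = Real.sqrt (2 * π) := by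
    have := integral_gaussian 2⁻¹
    rw [this]
    norm_num [mul_comm]
  rw [hg] at h
  linarith


lemma myPdf (x : ℝ) : gaussianPDFReal 0 1 x = (Real.sqrt (2 * π))⁻¹ * Real.exp (-2⁻¹ * x ^ 2) := by
  simp only [gaussianPDFReal, NNReal.coe_one, mul_one, sub_zero]
  ring_nf

lemma myGaussEq : gaussianReal 0 1 =
    (volume : Measure ℝ).withDensity fun x => ((gaussianPDFReal 0 1 x).toNNReal : ℝ≥0∞) := by
  rw [gaussianReal_of_var_ne_zero 0 one_ne_zero]
  rfl

lemma myIntegralGauss (g : ℝ → ℝ) :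
    ∫ x, g x ∂(gaussianReal 0 1) = ∫ x, gaussianPDFReal 0 1 x * g x := by
  rw [myGaussEq, integral_withDensity_eq_integral_smul
    ((measurable_gaussianPDFReal 0 1).real_toNNReal) g]
  congr 1 with x
  simp [NNReal.smul_def, Real.coe_toNNReal _ (gaussianPDFReal_nonneg 0 1 x)]

lemma myIntegrableGauss (g : ℝ → ℝ) (h : Integrable fun x => gaussianPDFReal 0 1 x * g x) :
    Integrable g (gaussianReal 0 1) := by
  rw [myGaussEq, integrable_withDensity_iff_integrable_smul
    ((measurable_gaussianPDFReal 0 1).real_toNNReal)]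
  refine h.congr (Filter.Eventually.of_forall fun x => ?_)
  simp [NNReal.smul_def, Real.coe_toNNReal _ (gaussianPDFReal_nonneg 0 1 x)]

lemma mySqrtPos : (0:ℝ) < Real.sqrt (2 * π) := Real.sqrt_pos.mpr (by positivity)

lemma myMoment1 : ∫ x : ℝ, x ∂(gaussianReal 0 1) = 0 := by
  rw [myIntegralGauss]
  have : ∀ x : ℝ, gaussianPDFReal 0 1 x * x
      = (Real.sqrt (2 * π))⁻¹ * (x * Real.exp (-2⁻¹ * x ^ 2)) := by
    intro x; rw [myPdf]; ring
  simp_rw [this, integral_const_mul, myInt1, mul_zero]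

lemma myMoment2 : ∫ x : ℝ, x ^ 2 ∂(gaussianReal 0 1) = 1 := by
  rw [myIntegralGauss]
  have : ∀ x : ℝ, gaussianPDFReal 0 1 x * x ^ 2
      = (Real.sqrt (2 * π))⁻¹ * (x ^ 2 * Real.exp (-2⁻¹ * x ^ 2)) := by
    intro x; rw [myPdf]; ring
  simp_rw [this, integral_const_mul, myInt2]
  exact inv_mul_cancel₀ mySqrtPos.ne'

lemma myIntegrable1 : Integrable (fun x : ℝ => x) (gaussianReal 0 1) := by
  refine myIntegrableGauss _ ?_
  refine (myIone.const_mul ((Real.sqrt (2 * π))⁻¹)).congr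
    (Filter.Eventually.of_forall fun x => ?_)
  simp only []; rw [myPdf]; ring

lemma myIntegrable2 : Integrable (fun x : ℝ => x ^ 2) (gaussianReal 0 1) := by
  refine myIntegrableGauss _ ?_
  refine (myIsq.const_mul ((Real.sqrt (2 * π))⁻¹)).congr
    (Filter.Eventually.of_forall fun x => ?_)
  simp only []; rw [myPdf]; ring

lemma myMemL2 : MemLp (fun x : ℝ => x) 2 (gaussianReal 0 1) := by
  rw [show (fun x : ℝ => x) = id from rfl, memLp_two_iff_integrable_sq aestronglyMeasurable_id]
  simp only [id]
  exact myIntegrable2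

lemma myVarianceCongr {Ω : Type*} {mm : MeasurableSpace Ω} {μ : Measure Ω} {f g : Ω → ℝ}
    (h : f =ᵐ[μ] g) : variance f μ = variance g μ := by
  have hi : μ[f] = μ[g] := integral_congr_ae h
  unfold variance evariance
  rw [hi]
  congr 1
  apply lintegral_congr_ae
  filter_upwards [h] with ω hω
  rw [hω]

end SobolAux

/-- With `X` Rademacher and `Z, Z'` i.i.d. standard normal independent of `X`,
for `f(X,Z) = X·Z` and `f'(X,Z') = X²·Z'` we have `E[f(X,Z)|Z] = 0` a.s. and
`E[f'(X,Z')|Z'] = Z'` a.s.; hence the first-order Sobol' index of the intrinsic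
randomness is `0` in the first representation and `1` in the second. -/
theorem stmt5 {Ω : Type*} [MeasurableSpace Ω] (μ : Measure Ω) [IsProbabilityMeasure μ]
    (X Z Z' : Ω → ℝ)
    (hmeas : ∀ i, Measurable (![X, Z, Z'] i))
    (hindep : iIndepFun ![X, Z, Z'] μ)
    (hX : μ.map X = (1/2 : ℝ≥0∞) • Measure.dirac (1 : ℝ)
      + (1/2 : ℝ≥0∞) • Measure.dirac (-1 : ℝ))
    (hZ : μ.map Z = gaussianReal 0 1) (hZ' : μ.map Z' = gaussianReal 0 1) :
    let mZ : MeasurableSpace Ω := MeasurableSpace.comap Z inferInstance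
    let mZ' : MeasurableSpace Ω := MeasurableSpace.comap Z' inferInstance
    (μ[(fun ω => X ω * Z ω) | mZ] =ᵐ[μ] fun _ => 0) ∧
    (μ[(fun ω => (X ω) ^ 2 * Z' ω) | mZ'] =ᵐ[μ] Z') ∧
    variance (μ[(fun ω => X ω * Z ω) | mZ]) μ / variance (fun ω => X ω * Z ω) μ = 0 ∧
    variance (μ[(fun ω => (X ω) ^ 2 * Z' ω) | mZ']) μ
      / variance (fun ω => (X ω) ^ 2 * Z' ω) μ = 1 := by
  have hXm : Measurable X := by simpa using hmeas 0
  have hZm : Measurable Z := by simpa using hmeas 1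
  have hZ'm : Measurable Z' := by simpa using hmeas 2
  -- X is ±1 a.e.
  have hsmeas : MeasurableSet ({1, -1} : Set ℝ)ᶜ :=
    (Set.Finite.measurableSet (by simp)).compl
  have haeX : ∀ᵐ ω ∂μ, X ω = 1 ∨ X ω = -1 := by
    have h0 : μ.map X ({1, -1} : Set ℝ)ᶜ = 0 := by
      rw [hX]
      simp [Measure.dirac_apply' _ hsmeas, Set.indicator_apply]
    rw [Measure.map_apply hXm hsmeas] at h0
    rw [ae_iff]
    have hset : {ω | ¬(X ω = 1 ∨ X ω = -1)} = X ⁻¹' (({1, -1} : Set ℝ)ᶜ) := by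
      ext ω; simp [Set.mem_preimage]
    rw [hset]
    exact h0
  -- integrability of X
  have hXint : Integrable X μ := by
    refine (integrable_const (1:ℝ)).mono' hXm.aestronglyMeasurable ?_
    filter_upwards [haeX] with ω hω
    rcases hω with h | h <;> simp [h]
  -- E[X] = 0
  have hEX : μ[X] = 0 := by
    have := integral_map hXm.aemeasurable (aestronglyMeasurable_id (μ := μ.map X))
    rw [hX] at this
    rw [show ∫ ω, X ω ∂μ = ∫ x, id x ∂((1/2 : ℝ≥0∞) • Measure.dirac (1 : ℝ)
      + (1/2 : ℝ≥0∞) • Measure.dirac (-1 : ℝ)) from this.symm]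
    have hd : ∀ a : ℝ, Integrable id ((1/2 : ℝ≥0∞) • Measure.dirac a) := by
      intro a
      refine Integrable.smul_measure ⟨aestronglyMeasurable_id, ?_⟩ (by norm_num)
      simp [HasFiniteIntegral, lintegral_dirac]
    rw [integral_add_measure (hd 1) (hd (-1)), integral_smul_measure, integral_smul_measure,
      integral_dirac, integral_dirac]
    norm_num
  -- integrability of Z, Z'
  have hZint : Integrable Z μ := by
    have := (integrable_map_measure (aestronglyMeasurable_id (μ := μ.map Z))
      hZm.aemeasurable).1 (by rw [hZ]; exact myIntegrable1)
    simpa [Function.comp_def] using this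
  have hZ'int : Integrable Z' μ := by
    have := (integrable_map_measure (aestronglyMeasurable_id (μ := μ.map Z'))
      hZ'm.aemeasurable).1 (by rw [hZ']; exact myIntegrable1)
    simpa [Function.comp_def] using this
  -- independence of X and Z
  have hIndXZ : IndepFun X Z μ := hindep.indepFun (i := 0) (j := 1) (by decide)
  have hXZint : Integrable (fun ω => X ω * Z ω) μ := hIndXZ.integrable_mul hXint hZint
  -- Part 1
  have hmZle : MeasurableSpace.comap Z inferInstance ≤ _ := hZm.comap_le
  have hmZ'le : MeasurableSpace.comap Z' inferInstance ≤ _ := hZ'm.comap_le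
  have hcondX : μ[X | (MeasurableSpace.comap Z inferInstance)] =ᵐ[μ] fun _ => μ[X] :=
    condExp_indep_eq hXm.comap_le hmZle (comap_measurable X).stronglyMeasurable
      ((IndepFun_iff_Indep _ _ _).1 hIndXZ)
  have hmul : μ[Z * X | (MeasurableSpace.comap Z inferInstance)] =ᵐ[μ] Z * μ[X | (MeasurableSpace.comap Z inferInstance)] :=
    condExp_mul_of_stronglyMeasurable_left (comap_measurable Z).stronglyMeasurable
      (by refine hXZint.congr (Filter.Eventually.of_forall fun ω => ?_)
          simp [mul_comm])
      hXint
  have part1 : μ[(fun ω => X ω * Z ω) | (MeasurableSpace.comap Z inferInstance)] =ᵐ[μ] fun _ => 0 := by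
    have heq : (fun ω => X ω * Z ω) = Z * X := by funext ω; simp [mul_comm]
    rw [heq]
    filter_upwards [hmul, hcondX] with ω h1 h2
    simp only [Pi.mul_apply] at h1 ⊢
    rw [h1, h2, hEX, mul_zero]
  -- Part 2
  have haeq : (fun ω => (X ω) ^ 2 * Z' ω) =ᵐ[μ] Z' := by
    filter_upwards [haeX] with ω hω
    rcases hω with h | h <;> simp [h]
  have hcondZ' : μ[Z' | (MeasurableSpace.comap Z' inferInstance)] = Z' :=
    condExp_of_stronglyMeasurable hmZ'le (comap_measurable Z').stronglyMeasurable hZ'int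
  have part2 : μ[(fun ω => (X ω) ^ 2 * Z' ω) | (MeasurableSpace.comap Z' inferInstance)] =ᵐ[μ] Z' := by
    have := condExp_congr_ae (m := (MeasurableSpace.comap Z' inferInstance)) haeq
    rw [hcondZ'] at this
    exact this
  -- variance of Z'
  have hZ'L2 : MemLp Z' 2 μ := by
    have := (memLp_map_measure_iff (aestronglyMeasurable_id (μ := μ.map Z'))
      hZ'm.aemeasurable).1 (by rw [hZ']; exact myMemL2)
    simpa [Function.comp_def] using this
  have hEZ' : μ[Z'] = 0 := by
    have := integral_map hZ'm.aemeasurable (aestronglyMeasurable_id (μ := μ.map Z'))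
    rw [hZ'] at this
    rw [show ∫ ω, Z' ω ∂μ = ∫ x, id x ∂(gaussianReal 0 1) from this.symm]
    simpa using myMoment1
  have hEZ'sq : μ[Z' ^ 2] = 1 := by
    have := integral_map hZ'm.aemeasurable
      ((continuous_pow 2).aestronglyMeasurable (μ := μ.map Z'))
    rw [hZ'] at this
    rw [show μ[Z' ^ 2] = ∫ x, x ^ 2 ∂(gaussianReal 0 1) by
      rw [this]; rfl]
    exact myMoment2
  have hvarZ' : variance Z' μ = 1 := by
    rw [variance_eq_sub hZ'L2, hEZ', hEZ'sq]
    norm_num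
  -- conclude
  have h3 : variance (μ[(fun ω => X ω * Z ω) | MeasurableSpace.comap Z inferInstance]) μ
      / variance (fun ω => X ω * Z ω) μ = 0 := by
    rw [myVarianceCongr part1, show (fun _ : Ω => (0:ℝ)) = (0 : Ω → ℝ) from rfl,
      variance_zero, zero_div]
  have h4 : variance (μ[(fun ω => (X ω) ^ 2 * Z' ω) | MeasurableSpace.comap Z' inferInstance]) μ
      / variance (fun ω => (X ω) ^ 2 * Z' ω) μ = 1 := by
    rw [myVarianceCongr part2, myVarianceCongr haeq, hvarZ']
    norm_num
  intro mZ mZ'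
  exact ⟨part1, part2, h3, h4⟩
end

section
/- Under the hypotheses of the previous example (X Rademacher, Z, Z' i.i.d. N(0,1) independent of X, f(X,Z)=XZ, f'(X,Z')=X²Z'), the total Sobol' index of X satisfies S_X^T(f) = 1 - S_Z(f) = 1 and S_X^T(f') = 1 - S_{Z'}(f') = 0; thus total Sobol' indices of uncertain parameters may depend on the chosen representation of a stochastic model. -/
open MeasureTheory ProbabilityTheory Real
open scoped ENNReal

lemma my_variance_congr {Ω : Type*} {m : MeasurableSpace Ω} {μ : Measure Ω} {X Y : Ω → ℝ}
    (h : X =ᵐ[μ] Y) : variance X μ = variance Y μ := by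
  have hi : ∫ ω, X ω ∂μ = ∫ ω, Y ω ∂μ := integral_congr_ae h
  unfold ProbabilityTheory.variance ProbabilityTheory.evariance
  rw [hi]
  congr 1
  exact lintegral_congr_ae (h.mono fun ω hω => by simp only [hω])

lemma my_int_dirac (c : ℝ) : Integrable (fun x : ℝ => x) (Measure.dirac c) := by
  refine (integrable_const c).congr ?_
  rw [Filter.EventuallyEq, MeasureTheory.ae_dirac_eq c]
  simp

lemma my_memLp_gauss : MemLp id 2 (gaussianReal 0 1) := by
  rw [memLp_two_iff_integrable_sq aestronglyMeasurable_id,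
    gaussianReal_of_var_ne_zero 0 one_ne_zero,
    integrable_withDensity_iff (measurable_gaussianPDF 0 1)
      (ae_of_all _ fun x => ENNReal.ofReal_lt_top)]
  have h1 : ∀ x : ℝ, id x ^ 2 * (gaussianPDF 0 1 x).toReal
      = (√(2 * π))⁻¹ * (x ^ (2:ℝ) * rexp (-(1/2) * x ^ 2)) := by
    intro x
    rw [gaussianPDF, ENNReal.toReal_ofReal (gaussianPDFReal_nonneg 0 1 x), gaussianPDFReal]
    simp only [NNReal.coe_one, mul_one, id_eq, Real.rpow_two]
    rw [show -(x - 0) ^ 2 / (2:ℝ) = -(1/2) * x ^ 2 by ring]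
    ring
  simp only [h1]
  exact (integrable_rpow_mul_exp_neg_mul_sq (by norm_num) (by norm_num)).const_mul _

/-- With `X` Rademacher and `Z, Z'` i.i.d. standard normal independent of `X`,
for `f(X,Z) = X·Z` and `f'(X,Z') = X²·Z'` the total Sobol' index of `X`,
`S_X^T = 1 - Var(E[Y|Z])/Var(Y)`, equals `1` for the first representation and `0` for
the second: total indices of uncertain parameters depend on the chosen representation. -/
theorem stmt6 {Ω : Type*} [MeasurableSpace Ω] (μ : Measure Ω) [IsProbabilityMeasure μ]
    (X Z Z' : Ω → ℝ)
    (hmeas : ∀ i, Measurable (![X, Z, Z'] i))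
    (hindep : iIndepFun ![X, Z, Z'] μ)
    (hX : μ.map X = (1/2 : ℝ≥0∞) • Measure.dirac (1 : ℝ)
      + (1/2 : ℝ≥0∞) • Measure.dirac (-1 : ℝ))
    (hZ : μ.map Z = gaussianReal 0 1) (hZ' : μ.map Z' = gaussianReal 0 1) :
    let mZ : MeasurableSpace Ω := MeasurableSpace.comap Z inferInstance
    let mZ' : MeasurableSpace Ω := MeasurableSpace.comap Z' inferInstance
    1 - variance (μ[(fun ω => X ω * Z ω) | mZ]) μ / variance (fun ω => X ω * Z ω) μ = 1 ∧
    1 - variance (μ[(fun ω => (X ω) ^ 2 * Z' ω) | mZ']) μ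
      / variance (fun ω => (X ω) ^ 2 * Z' ω) μ = 0 := by
  have hXm : Measurable X := hmeas 0
  have hZm : Measurable Z := hmeas 1
  have hZ'm : Measurable Z' := hmeas 2
  -- X ∈ {1, -1} a.e.
  have hs : MeasurableSet ({1, -1} : Set ℝ) :=
    (measurableSet_singleton (-1)).insert 1
  have hpre : μ (X ⁻¹' ({1, -1} : Set ℝ)ᶜ) = 0 := by
    rw [← Measure.map_apply hXm hs.compl, hX]
    simp [Measure.dirac_apply' _ hs.compl]
  have hXae : ∀ᵐ ω ∂μ, X ω = 1 ∨ X ω = -1 := by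
    have h2 : ∀ᵐ ω ∂μ, X ω ∈ ({1, -1} : Set ℝ) := by
      rw [ae_iff]
      exact hpre
    filter_upwards [h2] with ω hω
    simpa using hω
  -- Integrability of X
  have hXint : Integrable X μ := by
    refine (integrable_const (1:ℝ)).mono' hXm.aestronglyMeasurable ?_
    filter_upwards [hXae] with ω hω
    rcases hω with h | h <;> simp [h]
  -- E[X] = 0
  have hEX : ∫ ω, X ω ∂μ = 0 := by
    have h1 : ∫ ω, X ω ∂μ = ∫ x, x ∂(μ.map X) :=
      (integral_map hXm.aemeasurable aestronglyMeasurable_id).symm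
    rw [h1, hX, integral_add_measure, integral_smul_measure, integral_smul_measure,
      integral_dirac, integral_dirac]
    · norm_num
    · exact (my_int_dirac 1).smul_measure (by norm_num)
    · exact (my_int_dirac (-1)).smul_measure (by norm_num)
  -- Memℒp 2 / integrability of Z, Z'
  have hZ2 : MemLp Z 2 μ := by
    have h := my_memLp_gauss
    rw [← hZ] at h
    exact (memLp_map_measure_iff aestronglyMeasurable_id hZm.aemeasurable).mp h
  have hZ'2 : MemLp Z' 2 μ := by
    have h := my_memLp_gauss
    rw [← hZ'] at h
    exact (memLp_map_measure_iff aestronglyMeasurable_id hZ'm.aemeasurable).mp h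
  have hZint : Integrable Z μ := hZ2.integrable one_le_two
  have hZ'int : Integrable Z' μ := hZ'2.integrable one_le_two
  have hmZle : MeasurableSpace.comap Z inferInstance ≤ ‹MeasurableSpace Ω› := hZm.comap_le
  have hmZ'le : MeasurableSpace.comap Z' inferInstance ≤ ‹MeasurableSpace Ω› := hZ'm.comap_le
  haveI hsf : SigmaFinite (μ.trim hmZle) := by
    haveI : IsFiniteMeasure (μ.trim hmZle) := isFiniteMeasure_trim hmZle
    infer_instance
  haveI hsf' : SigmaFinite (μ.trim hmZ'le) := by
    haveI : IsFiniteMeasure (μ.trim hmZ'le) := isFiniteMeasure_trim hmZ'le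
    infer_instance
  have hindXZ : IndepFun X Z μ := by
    have := hindep.indepFun (i := 0) (j := 1) (by decide)
    simpa using this
  have hcomapX : MeasurableSpace.comap X inferInstance ≤ ‹MeasurableSpace Ω› := hXm.comap_le
  have hX2ae : (fun ω => (X ω) ^ 2 * Z' ω) =ᵐ[μ] Z' := by
    filter_upwards [hXae] with ω hω
    rcases hω with h | h <;> simp [h]
  have hvne : variance Z' μ ≠ 0 := by
    intro h0
    have hevlt : evariance Z' μ ≠ ⊤ := (evariance_lt_top hZ'2).ne
    have hev0 : evariance Z' μ = 0 := by
      rcases (ENNReal.toReal_eq_zero_iff _).mp h0 with h | h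
      · exact h
      · exact absurd h hevlt
    have hconst : Z' =ᵐ[μ] fun _ => ∫ ω, Z' ω ∂μ :=
      (evariance_eq_zero_iff hZ'm.aemeasurable).mp hev0
    have hmapc : μ.map Z' = Measure.dirac (∫ ω, Z' ω ∂μ) := by
      rw [Measure.map_congr hconst, Measure.map_const]
      simp
    rw [hZ'] at hmapc
    have h1 : gaussianReal 0 1 {∫ ω, Z' ω ∂μ} = 1 := by
      rw [hmapc]
      simp
    have h0' : gaussianReal 0 1 {∫ ω, Z' ω ∂μ} = 0 :=
      gaussianReal_absolutelyContinuous 0 one_ne_zero (measure_singleton _)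
    rw [h0'] at h1
    exact one_ne_zero h1.symm
  intro mZ mZ'
  constructor
  · -- first part
    have hZsm : StronglyMeasurable[mZ] Z :=
      (Measurable.of_comap_le le_rfl).stronglyMeasurable
    have hZXint : Integrable (Z * X) μ :=
      hindXZ.symm.integrable_mul hZint hXint
    have heq : (fun ω => X ω * Z ω) = Z * X := by
      ext ω; exact mul_comm _ _
    have hpull : μ[Z * X | mZ] =ᵐ[μ] Z * μ[X | mZ] :=
      condExp_mul_of_stronglyMeasurable_left hZsm hZXint hXint
    have hindm : Indep (MeasurableSpace.comap X inferInstance) mZ μ := hindXZ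
    have hcX : μ[X | mZ] =ᵐ[μ] fun _ => ∫ ω, X ω ∂μ :=
      condExp_indep_eq hcomapX hmZle
        (Measurable.of_comap_le le_rfl).stronglyMeasurable hindm
    have hzero : μ[(fun ω => X ω * Z ω) | mZ] =ᵐ[μ] fun _ => (0:ℝ) := by
      rw [heq]
      filter_upwards [hpull, hcX] with ω h1 h2
      simp only [Pi.mul_apply] at h1 ⊢
      rw [h1, h2, hEX, mul_zero]
    have hv0 : variance (μ[(fun ω => X ω * Z ω) | mZ]) μ = 0 := by
      rw [my_variance_congr hzero]
      exact variance_zero μ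
    rw [hv0, zero_div, sub_zero]
  · -- second part
    have hZ'sm : StronglyMeasurable[mZ'] Z' :=
      (Measurable.of_comap_le le_rfl).stronglyMeasurable
    have hcond : μ[(fun ω => (X ω) ^ 2 * Z' ω) | mZ'] =ᵐ[μ] Z' := by
      refine (condExp_congr_ae hX2ae).trans ?_
      rw [condExp_of_stronglyMeasurable hmZ'le hZ'sm hZ'int]
    rw [my_variance_congr hcond, my_variance_congr hX2ae, div_self hvne, sub_self]
end
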